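/- For fixed d, define M over pairs (i,j) with 0 ≤ j ≤ i ≤ r = ⌊d/2⌋ by M_{i,j} = V(j; i−j; d−2i) + C·W_{j−(d−2i), j} when valid (∞ if i = j = d/2 or indices invalid), where V is any function on signatures. Then for α = (m;p;z) ∈ I(d), min_{α' ∈ P(α)} (V(α') + C·W_{m'−z', m'}) = min{M_{i,j} : m ≤ i ≤ r, 0 ≤ j ≤ m−z}, i.e., the minimization over predecessors equals a rectangular range minimum query in M. -/

import Mathlib

/-- The signature set `S_n`: triples (m; p; z) with z ≤ m ≤ n and p ≤ n. -/
def SigSet (n : ℕ) : Set (ℕ × ℕ × ℕ) :=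
  {a | a.2.2 ≤ a.1 ∧ a.1 ≤ n ∧ a.2.1 ≤ n}

/-- The expansion relation (m';p';z') → (m;p;z) on `S_n`. -/
def Expand (n : ℕ) (a' a : ℕ × ℕ × ℕ) : Prop :=
  a' ∈ SigSet n ∧ a ∈ SigSet n ∧ a' ≠ a ∧
  ∃ e0 e1 : ℕ, e0 + e1 ≤ a'.2.1 ∧ a.1 = a'.1 + e0 + e1 ∧ a.2.2 = e1 ∧
    a.2.1 = a'.2.2 + 2 * (a'.2.1 - e0 - e1)

/-- I(d) = {(m;p;z) ∈ S_n : 2m + p = d}. -/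
def Iset (n d : ℕ) : Set (ℕ × ℕ × ℕ) :=
  {a ∈ SigSet n | 2 * a.1 + a.2.1 = d}

/-- I'(d) = {(m';p';z') ∈ S_n : 2m' + 2p' + z' = d and (p',z') ≠ (0,0)}. -/
def Iset' (n d : ℕ) : Set (ℕ × ℕ × ℕ) :=
  {a ∈ SigSet n | 2 * a.1 + 2 * a.2.1 + a.2.2 = d ∧ (a.2.1, a.2.2) ≠ (0, 0)}

/-- The immediate predecessor set P(α) = {α' : α' → α}. -/
def Pred (n : ℕ) (a : ℕ × ℕ × ℕ) : Set (ℕ × ℕ × ℕ) :=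
  {a' | Expand n a' a}

open scoped Classical

/-- For α = (m;p;z) ∈ I(d), the minimization of V(α') + C·W_{m'−z',m'} over
predecessors α' ∈ P(α) equals the rectangular range minimum query
min{ M_{i,j} : m ≤ i ≤ r, 0 ≤ j ≤ m−z } in the matrix M defined by the change
of variables j = m', i = m'+p', z' = d−2i (invalid entries being ∞). -/
theorem pred_min_eq_rmq (n d : ℕ) (C : ℝ) (hC : 0 ≤ C) (p : ℕ → ℝ)
    (V : ℕ × ℕ × ℕ → EReal) (W : ℕ → ℕ → ℝ)
    (hW : ∀ a b, W a b = ∑ j ∈ Finset.Ioc a b, p j)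
    (M : ℕ → ℕ → EReal)
    (hM : ∀ i j, M i j =
      if (j, i - j, d - 2 * i) ∈ Iset' n d ∧ j ≤ i ∧ i ≤ d / 2 then
        V (j, i - j, d - 2 * i) + ((C * W (j - (d - 2 * i)) j : ℝ) : EReal)
      else ⊤)
    (m q z : ℕ) (hα : (m, q, z) ∈ Iset n d) :
    sInf {x : EReal | ∃ a' ∈ Pred n (m, q, z),
        x = V a' + ((C * W (a'.1 - a'.2.2) a'.1 : ℝ) : EReal)} =
    sInf {x : EReal | ∃ i j : ℕ, m ≤ i ∧ i ≤ d / 2 ∧ j ≤ m - z ∧ x = M i j} := by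
  obtain ⟨⟨hzm, hmn, hqn⟩, hd⟩ := hα
  dsimp only at hd hzm hmn hqn
  apply le_antisymm
  · refine le_sInf ?_
    rintro x ⟨i, j, hmi, hid, hjmz, rfl⟩
    rw [hM]
    split_ifs with h
    · obtain ⟨⟨⟨hz'j, hjn, hpn⟩, hde, hne0⟩, hji, _⟩ := h
      simp only [ne_eq, Prod.mk.injEq, not_and] at hne0
      dsimp only at hz'j hjn hpn hde
      apply sInf_le
      refine ⟨(j, i - j, d - 2 * i),
        ⟨⟨hz'j, hjn, hpn⟩, ⟨hzm, hmn, hqn⟩, ?_, m - z - j, z, ?_, ?_, rfl, ?_⟩, rfl⟩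
      · intro hc
        rw [Prod.ext_iff, Prod.ext_iff] at hc
        dsimp only at hc
        omega
      · dsimp only; omega
      · dsimp only; omega
      · dsimp only; omega
    · exact le_top
  · refine le_sInf ?_
    rintro x ⟨⟨m', p', z'⟩, ⟨⟨hz'm', hm'n, hp'n⟩, _, hne, e0, e1, he01, hm, hz, hq⟩, rfl⟩
    dsimp only at he01 hm hz hq hz'm' hm'n hp'n
    have hd' : 2 * m' + 2 * p' + z' = d := by omega
    apply sInf_le
    refine ⟨m' + p', m', by omega, by omega, by omega, ?_⟩
    rw [hM]
    have h1 : (m' + p') - m' = p' := by omega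
    have h2 : d - 2 * (m' + p') = z' := by omega
    have hcond : (m', p', z') ∈ Iset' n d ∧ m' ≤ m' + p' ∧ m' + p' ≤ d / 2 := by
      refine ⟨⟨⟨hz'm', hm'n, hp'n⟩, hd', ?_⟩, by omega, by omega⟩
      intro hc
      simp only [Prod.mk.injEq] at hc
      apply hne
      simp only [Prod.mk.injEq]
      omega
    rw [h1, h2, if_pos hcond]
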